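/- In the field ℚ(x, y), define z = (A·y + B·E)/x, u = (D·z + C·B)/y, t = (E·u + A·C)/z, where A, B, C, D, E are fixed nonzero rational constants (or indeterminates over ℚ). Then t = (C·x + E·D)/y. Consequently the rank-two LP mutation sequence with seed {(x, Ay+BE), (y, Cx+DE)} has period five in the cluster variables: the sequence x, y, z, u, t, x, y, … repeats. -/

import Mathlib

open MvPolynomial in
set_option maxHeartbeats 2000000 in
/-- Pentagon identity for the rank-two `(b,c) = (1,1)` LP algebra of finite type.  In the
field `ℚ(A,B,C,D,E)(x,y)` of rational functions, with `z = (Ay+BE)/x`, `u = (Dz+CB)/y`,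
`t = (Eu+AC)/z`, one has `t = (Cx+ED)/y`; consequently the mutation sequence has period five:
the next two cluster variables `(Bt+AD)/u` and `(Cx+ED)/t` are `x` and `y` again. -/
theorem stmt6 :
    let f := algebraMap (MvPolynomial (Fin 7) ℚ) (FractionRing (MvPolynomial (Fin 7) ℚ))
    let A := f (X 0)
    let B := f (X 1)
    let C := f (X 2)
    let D := f (X 3)
    let E := f (X 4)
    let x := f (X 5)
    let y := f (X 6)
    let z := (A * y + B * E) / x
    let u := (D * z + C * B) / y
    let t := (E * u + A * C) / z
    t = (C * x + E * D) / y ∧ (B * t + A * D) / u = x ∧ (C * x + E * D) / t = y := by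
  intro f A B C D E x y z u t
  have hinj : Function.Injective f := IsFractionRing.injective _ _
  have key : ∀ p : MvPolynomial (Fin 7) ℚ,
      MvPolynomial.eval (fun _ => (1:ℚ)) p ≠ 0 → f p ≠ 0 := by
    intro p hp h
    apply hp
    have : p = 0 := by
      apply hinj
      simpa using h
    simp [this]
  have hA : f (X 0) ≠ 0 := key _ (by simp)
  have hB : f (X 1) ≠ 0 := key _ (by simp)
  have hC : f (X 2) ≠ 0 := key _ (by simp)
  have hD : f (X 3) ≠ 0 := key _ (by simp)
  have hE : f (X 4) ≠ 0 := key _ (by simp)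
  have hx : f (X 5) ≠ 0 := key _ (by simp)
  have hy : f (X 6) ≠ 0 := key _ (by simp)
  have hx' : x ≠ 0 := hx
  have hy' : y ≠ 0 := hy
  have h1 : A * y + B * E ≠ 0 := by
    have := key (X 0 * X 6 + X 1 * X 4 : MvPolynomial (Fin 7) ℚ) (by norm_num)
    simpa [A, B, E, y, f] using this
  have h2 : D * (A * y + B * E) + C * B * x ≠ 0 := by
    have := key (X 3 * (X 0 * X 6 + X 1 * X 4) + X 2 * X 1 * X 5 :
        MvPolynomial (Fin 7) ℚ) (by norm_num)
    simpa [A, B, C, D, E, x, y, f] using this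
  have h3 : C * x + E * D ≠ 0 := by
    have := key (X 2 * X 5 + X 4 * X 3 : MvPolynomial (Fin 7) ℚ) (by norm_num)
    simpa [C, D, E, x, f] using this
  have hz : z ≠ 0 := by
    simp only [z]
    exact div_ne_zero h1 hx
  have h1' : E * B + A * y ≠ 0 := by
    rw [mul_comm E B, add_comm]; exact h1
  have ht : t = (C * x + E * D) / y := by
    simp only [t, u, z]
    field_simp
    ring_nf
    field_simp
    ring
  have hu' : u = (D * (A * y + B * E) + C * B * x) / (x * y) := by
    simp only [u, z]
    rw [div_eq_div_iff hy (mul_ne_zero hx hy)]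
    field_simp
    ring
  have hu : u ≠ 0 := by
    rw [hu']
    exact div_ne_zero h2 (mul_ne_zero hx hy)
  refine ⟨ht, ?_, ?_⟩
  · rw [ht, hu', div_eq_iff (div_ne_zero h2 (mul_ne_zero hx hy))]
    field_simp
    ring
  · rw [ht, div_div_eq_mul_div, mul_comm, mul_div_assoc, div_self h3, mul_one]
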